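/- Let B, V_B, W_B be r×r real symmetric positive definite matrices, let U ∈ St(r,p) and let U⊥ be an orthonormal completion of U. Let D ∈ ℝ^{(p−r)×r}, set θ_U := U⊥D, let θ_B be an r×r real symmetric matrix, and set ξ := U B θ_Uᵀ + U θ_B Uᵀ + θ_U B Uᵀ. Then, with g := tr(V_B DᵀD) + tr(W_B θ_B W_B θ_B), it holds that min( (λmin(W_B⁻¹))², 2·λmin(B V_B⁻¹ B) )·g ≤ ‖ξ‖_F² ≤ max( (λmax(W_B⁻¹))², 2·λmax(B V_B⁻¹ B) )·g. -/

import Mathlib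

open Matrix

/-- The smallest eigenvalue of a (Hermitian) real matrix; junk value `0` otherwise. -/
noncomputable def eigMin {n : ℕ} (M : Matrix (Fin n) (Fin n) ℝ) : ℝ := by
  classical exact if h : M.IsHermitian then ⨅ i, h.eigenvalues i else 0

/-- The largest eigenvalue of a (Hermitian) real matrix; junk value `0` otherwise. -/
noncomputable def eigMax {n : ℕ} (M : Matrix (Fin n) (Fin n) ℝ) : ℝ := by
  classical exact if h : M.IsHermitian then ⨆ i, h.eigenvalues i else 0

/-- The squared Frobenius norm `‖A‖_F² = tr(AᵀA)`. -/
noncomputable def frobSq {m n : ℕ} (A : Matrix (Fin m) (Fin n) ℝ) : ℝ :=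
  Matrix.trace (Aᵀ * A)

lemma posdef_decomp {n : ℕ} (A : Matrix (Fin n) (Fin n) ℝ) (hA : A.PosDef) :
    ∃ (V : Matrix (Fin n) (Fin n) ℝ) (d : Fin n → ℝ),
      Vᵀ * V = 1 ∧ V * Vᵀ = 1 ∧ A = V * Matrix.diagonal d * Vᵀ ∧
      (∀ i, 0 < d i ∧ eigMin A ≤ d i ∧ d i ≤ eigMax A) ∧
      (Fin n → 0 < eigMin A) := by
  have hH : A.IsHermitian := hA.1
  refine ⟨(hH.eigenvectorUnitary : Matrix (Fin n) (Fin n) ℝ), hH.eigenvalues, ?_, ?_, ?_, ?_, ?_⟩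
  · have := (Matrix.mem_unitaryGroup_iff').mp hH.eigenvectorUnitary.2
    simpa [Matrix.star_eq_conjTranspose] using this
  · have := (Matrix.mem_unitaryGroup_iff).mp hH.eigenvectorUnitary.2
    simpa [Matrix.star_eq_conjTranspose] using this
  · have := hH.spectral_theorem
    simpa [Matrix.star_eq_conjTranspose, Function.comp] using this
  · intro i
    refine ⟨hA.eigenvalues_pos i, ?_, ?_⟩
    · simp only [eigMin, dif_pos hH]
      exact ciInf_le (Set.Finite.bddBelow (Set.finite_range _)) i
    · simp only [eigMax, dif_pos hH]
      exact le_ciSup (Set.Finite.bddAbove (Set.finite_range _)) i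
  · intro i
    haveI : Nonempty (Fin n) := ⟨i⟩
    simp only [eigMin, dif_pos hH]
    have h0 : (0:ℝ) < sInf (Set.range hH.eigenvalues) := by
      rw [(Set.finite_range _).lt_csInf_iff (Set.range_nonempty _)]
      rintro x ⟨j, rfl⟩; exact hA.eigenvalues_pos j
    simpa [iInf] using h0

lemma trace_diag_mul {n : ℕ} (w : Fin n → ℝ) (G : Matrix (Fin n) (Fin n) ℝ) :
    Matrix.trace (Matrix.diagonal w * G) = ∑ i, w i * G i i := by
  simp [Matrix.trace, Matrix.diag, Matrix.diagonal_mul]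

lemma diag_inv_decomp {n : ℕ} {M V : Matrix (Fin n) (Fin n) ℝ} {d : Fin n → ℝ}
    (hd : ∀ i, d i ≠ 0) (hVtV : Vᵀ * V = 1) (hVVt : V * Vᵀ = 1)
    (hdec : M = V * Matrix.diagonal d * Vᵀ) :
    M⁻¹ = V * Matrix.diagonal (fun i => (d i)⁻¹) * Vᵀ := by
  apply Matrix.inv_eq_right_inv
  rw [hdec]
  calc V * Matrix.diagonal d * Vᵀ * (V * Matrix.diagonal (fun i => (d i)⁻¹) * Vᵀ)
      = V * (Matrix.diagonal d * ((Vᵀ * V) * (Matrix.diagonal (fun i => (d i)⁻¹) * Vᵀ))) := by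
        simp only [Matrix.mul_assoc]
    _ = V * ((Matrix.diagonal d * Matrix.diagonal (fun i => (d i)⁻¹)) * Vᵀ) := by
        rw [hVtV, Matrix.one_mul, Matrix.mul_assoc]
    _ = V * Vᵀ := by
        rw [Matrix.diagonal_mul_diagonal]
        simp only [mul_inv_cancel₀ (hd _)]
        rw [Matrix.diagonal_one, Matrix.one_mul]
    _ = 1 := hVVt

lemma L2 {n m : ℕ} (M : Matrix (Fin n) (Fin n) ℝ) (hM : M.PosDef)
    (E : Matrix (Fin m) (Fin n) ℝ) :
    0 ≤ Matrix.trace (M⁻¹ * Eᵀ * E) ∧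
    eigMin M * Matrix.trace (M⁻¹ * Eᵀ * E) ≤ Matrix.trace (Eᵀ * E) ∧
    Matrix.trace (Eᵀ * E) ≤ eigMax M * Matrix.trace (M⁻¹ * Eᵀ * E) := by
  obtain ⟨V, d, hVtV, hVVt, hdec, hd, hpos⟩ := posdef_decomp M hM
  set F := E * V with hF
  have hMinv := diag_inv_decomp (fun i => (hd i).1.ne') hVtV hVVt hdec
  have e1 : Matrix.trace (M⁻¹ * Eᵀ * E) = ∑ i, (d i)⁻¹ * ((Fᵀ * F) i i) := by
    rw [Matrix.trace_mul_cycle, hMinv]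
    have h : E * (V * Matrix.diagonal (fun i => (d i)⁻¹) * Vᵀ) * Eᵀ
        = F * Matrix.diagonal (fun i => (d i)⁻¹) * Fᵀ := by
      rw [hF, Matrix.transpose_mul]; simp only [Matrix.mul_assoc]
    rw [h, Matrix.trace_mul_cycle, Matrix.trace_mul_comm, trace_diag_mul]
  have e2 : Matrix.trace (Eᵀ * E) = ∑ i, (Fᵀ * F) i i := by
    have h : Fᵀ * F = Vᵀ * (Eᵀ * E) * V := by
      rw [hF, Matrix.transpose_mul]; simp only [Matrix.mul_assoc]
    have h2 : Matrix.trace (Fᵀ * F) = Matrix.trace (Eᵀ * E) := by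
      rw [h, Matrix.trace_mul_cycle, hVVt, Matrix.one_mul]
    rw [← h2]; simp [Matrix.trace, Matrix.diag]
  have hFF : ∀ i, 0 ≤ (Fᵀ * F) i i := by
    intro i
    simp only [Matrix.mul_apply, Matrix.transpose_apply]
    exact Finset.sum_nonneg fun k _ => mul_self_nonneg _
  refine ⟨?_, ?_, ?_⟩
  · rw [e1]
    exact Finset.sum_nonneg fun i _ =>
      mul_nonneg (inv_nonneg.mpr (hd i).1.le) (hFF i)
  · rw [e1, e2, Finset.mul_sum]
    refine Finset.sum_le_sum fun i _ => ?_
    have h1 : eigMin M * (d i)⁻¹ ≤ 1 := by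
      rw [← div_eq_mul_inv]
      exact div_le_one_of_le₀ (hd i).2.1 (hd i).1.le
    nlinarith [hFF i]
  · rw [e1, e2, Finset.mul_sum]
    refine Finset.sum_le_sum fun i _ => ?_
    have h1 : 1 ≤ eigMax M * (d i)⁻¹ := by
      rw [← div_eq_mul_inv]
      exact (one_le_div (hd i).1).mpr (hd i).2.2
    nlinarith [hFF i]

lemma L1 {n : ℕ} (C : Matrix (Fin n) (Fin n) ℝ) (hC : C.PosDef)
    (Y : Matrix (Fin n) (Fin n) ℝ) (hY : Yᵀ = Y) :
    0 ≤ Matrix.trace (C⁻¹ * Y * C⁻¹ * Y) ∧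
    eigMin C ^ 2 * Matrix.trace (C⁻¹ * Y * C⁻¹ * Y) ≤ Matrix.trace (Y * Y) ∧
    Matrix.trace (Y * Y) ≤ eigMax C ^ 2 * Matrix.trace (C⁻¹ * Y * C⁻¹ * Y) := by
  obtain ⟨V, d, hVtV, hVVt, hdec, hd, hpos⟩ := posdef_decomp C hC
  set Z := Vᵀ * Y * V with hZ
  have hMinv := diag_inv_decomp (fun i => (hd i).1.ne') hVtV hVVt hdec
  set w : Fin n → ℝ := fun i => (d i)⁻¹ with hw
  have hZsymm : ∀ i j, Z j i = Z i j := by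
    intro i j
    have hzt : Zᵀ = Z := by
      rw [hZ, Matrix.transpose_mul, Matrix.transpose_mul, Matrix.transpose_transpose, hY,
        Matrix.mul_assoc]
    calc Z j i = Zᵀ i j := rfl
      _ = Z i j := by rw [hzt]
  have hYZ : Y = V * Z * Vᵀ := by
    rw [hZ]
    calc Y = (V * Vᵀ) * Y * (V * Vᵀ) := by rw [hVVt, Matrix.one_mul, Matrix.mul_one]
      _ = V * (Vᵀ * Y * V) * Vᵀ := by simp only [Matrix.mul_assoc]
  have hDZ : ∀ i, (Z * Matrix.diagonal w * Z) i i = ∑ j, w j * (Z i j * Z j i) := by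
    intro i
    rw [Matrix.mul_apply]
    refine Finset.sum_congr rfl fun j _ => ?_
    rw [Matrix.mul_diagonal]
    ring
  have e1 : Matrix.trace (C⁻¹ * Y * C⁻¹ * Y)
      = ∑ i, ∑ j, w i * w j * (Z i j * Z j i) := by
    have h : C⁻¹ * Y * C⁻¹ * Y
        = V * (Matrix.diagonal w * (Z * Matrix.diagonal w * Z)) * Vᵀ := by
      rw [hMinv, hYZ]
      calc V * Matrix.diagonal w * Vᵀ * (V * Z * Vᵀ) * (V * Matrix.diagonal w * Vᵀ) *
            (V * Z * Vᵀ)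
          = V * (Matrix.diagonal w * ((Vᵀ * V) * (Z * ((Vᵀ * V) *
              (Matrix.diagonal w * ((Vᵀ * V) * (Z * Vᵀ))))))) := by
            simp only [Matrix.mul_assoc]
        _ = _ := by rw [hVtV]; simp only [Matrix.one_mul, Matrix.mul_assoc]
    rw [h, Matrix.trace_mul_cycle, ← Matrix.mul_assoc, hVtV, Matrix.one_mul, trace_diag_mul]
    rw [Finset.sum_congr rfl fun i _ => by rw [hDZ i]]
    rw [Finset.sum_congr rfl fun i (_ : i ∈ Finset.univ) => (Finset.mul_sum _ _ _)]
    exact Finset.sum_congr rfl fun i _ => Finset.sum_congr rfl fun j _ => by ring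
  have e2 : Matrix.trace (Y * Y) = ∑ i, ∑ j, Z i j * Z j i := by
    have h : Y * Y = V * (Z * Z) * Vᵀ := by
      rw [hYZ]
      calc V * Z * Vᵀ * (V * Z * Vᵀ)
          = V * (Z * ((Vᵀ * V) * (Z * Vᵀ))) := by simp only [Matrix.mul_assoc]
        _ = V * (Z * Z) * Vᵀ := by rw [hVtV, Matrix.one_mul]; simp only [Matrix.mul_assoc]
    rw [h, Matrix.trace_mul_cycle, ← Matrix.mul_assoc, hVtV, Matrix.one_mul]
    simp [Matrix.trace, Matrix.diag, Matrix.mul_apply]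
  have hterm : ∀ i j, 0 ≤ Z i j * Z j i := by
    intro i j; rw [hZsymm i j]; exact mul_self_nonneg _
  refine ⟨?_, ?_, ?_⟩
  · rw [e1]
    refine Finset.sum_nonneg fun i _ => Finset.sum_nonneg fun j _ => ?_
    have := hterm i j
    have hwi : 0 ≤ w i := inv_nonneg.mpr (hd i).1.le
    have hwj : 0 ≤ w j := inv_nonneg.mpr (hd j).1.le
    positivity
  · rw [e1, e2, Finset.mul_sum]
    refine Finset.sum_le_sum fun i _ => ?_
    rw [Finset.mul_sum]
    refine Finset.sum_le_sum fun j _ => ?_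
    have hm : 0 < eigMin C := hpos i
    have h1 : eigMin C * eigMin C ≤ d i * d j :=
      mul_le_mul (hd i).2.1 (hd j).2.1 hm.le (hd i).1.le
    have hij : (0:ℝ) < d i * d j := mul_pos (hd i).1 (hd j).1
    have h2 : eigMin C ^ 2 * (w i * w j) ≤ 1 := by
      have hww : w i * w j = (d i * d j)⁻¹ := by
        show (d i)⁻¹ * (d j)⁻¹ = (d i * d j)⁻¹
        rw [mul_inv]
      rw [hww, ← div_eq_mul_inv, div_le_one hij, pow_two]; exact h1
    nlinarith [hterm i j, mul_le_mul_of_nonneg_right h2 (hterm i j)]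
  · rw [e1, e2, Finset.mul_sum]
    refine Finset.sum_le_sum fun i _ => ?_
    rw [Finset.mul_sum]
    refine Finset.sum_le_sum fun j _ => ?_
    have h1 : d i * d j ≤ eigMax C * eigMax C :=
      mul_le_mul (hd i).2.2 (hd j).2.2 (hd j).1.le ((hd i).1.trans_le (hd i).2.2).le
    have hij : (0:ℝ) < d i * d j := mul_pos (hd i).1 (hd j).1
    have h2 : 1 ≤ eigMax C ^ 2 * (w i * w j) := by
      have hww : w i * w j = (d i * d j)⁻¹ := by
        show (d i)⁻¹ * (d j)⁻¹ = (d i * d j)⁻¹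
        rw [mul_inv]
      rw [hww, ← div_eq_mul_inv, le_div_iff₀ hij, one_mul, pow_two]; exact h1
    nlinarith [hterm i j, mul_le_mul_of_nonneg_right h2 (hterm i j)]

lemma posdef_conj {n : ℕ} {A B : Matrix (Fin n) (Fin n) ℝ} (hA : A.PosDef) (hB : B.PosDef) :
    (B * A * B).PosDef := by
  constructor
  · show (B * A * B)ᴴ = B * A * B
    simp only [Matrix.conjTranspose_mul, hA.1.eq, hB.1.eq, Matrix.mul_assoc]
  · have hc := hA.conjTranspose_mul_mul_same (B := B) (Matrix.mulVec_injective_iff_isUnit.mpr hB.isUnit)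
    rw [hB.1.eq] at hc
    exact hc.2

/-- Spectrum bounds for the map `(θ_U, θ_B) ↦ UBθ_Uᵀ + Uθ_BUᵀ + θ_UBUᵀ` on the horizontal
space of the polar quotient geometry on fixed-rank PSD matrices. -/
theorem stmt11 {p r : ℕ}
    (B VB WB : Matrix (Fin r) (Fin r) ℝ) (hB : B.PosDef) (hVB : VB.PosDef) (hWB : WB.PosDef)
    (U : Matrix (Fin p) (Fin r) ℝ) (Uperp : Matrix (Fin p) (Fin (p - r)) ℝ)
    (hU : Uᵀ * U = 1) (hUperp : Uperpᵀ * Uperp = 1) (hUUperp : Uᵀ * Uperp = 0)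
    (D : Matrix (Fin (p - r)) (Fin r) ℝ)
    (θU : Matrix (Fin p) (Fin r) ℝ) (hθU : θU = Uperp * D)
    (θB : Matrix (Fin r) (Fin r) ℝ) (hθB : θB.IsSymm)
    (ξ : Matrix (Fin p) (Fin p) ℝ) (hξ : ξ = U * B * θUᵀ + U * θB * Uᵀ + θU * B * Uᵀ)
    (g : ℝ) (hg : g = Matrix.trace (VB * Dᵀ * D) + Matrix.trace (WB * θB * WB * θB)) :
    min ((eigMin WB⁻¹) ^ 2) (2 * eigMin (B * VB⁻¹ * B)) * g ≤ frobSq ξ ∧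
    frobSq ξ ≤ max ((eigMax WB⁻¹) ^ 2) (2 * eigMax (B * VB⁻¹ * B)) * g := by
  have hBs : Bᵀ = B := by
    rw [← Matrix.conjTranspose_eq_transpose_of_trivial]; exact hB.1
  have hθBs : θBᵀ = θB := hθB
  have hUpU : Uperpᵀ * U = 0 := by
    have := congrArg Matrix.transpose hUUperp
    simpa [Matrix.transpose_mul] using this
  -- determinant/inverse facts
  have hBdet : IsUnit B.det := (Matrix.isUnit_iff_isUnit_det _).mp hB.isUnit
  have hVBdet : IsUnit VB.det := (Matrix.isUnit_iff_isUnit_det _).mp hVB.isUnit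
  have hWBdet : IsUnit WB.det := (Matrix.isUnit_iff_isUnit_det _).mp hWB.isUnit
  have hBB : B * B⁻¹ = 1 := Matrix.mul_nonsing_inv B hBdet
  have hBinvB : B⁻¹ * B = 1 := Matrix.nonsing_inv_mul B hBdet
  have hVV : VB⁻¹ * VB = 1 := Matrix.nonsing_inv_mul VB hVBdet
  have hWBinvinv : (WB⁻¹)⁻¹ = WB := Matrix.nonsing_inv_nonsing_inv WB hWBdet
  have hM : (B * VB⁻¹ * B).PosDef := posdef_conj hVB.inv hB
  have hMinv : (B * VB⁻¹ * B)⁻¹ = B⁻¹ * VB * B⁻¹ := by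
    apply Matrix.inv_eq_right_inv
    calc B * VB⁻¹ * B * (B⁻¹ * VB * B⁻¹)
        = B * (VB⁻¹ * ((B * B⁻¹) * (VB * B⁻¹))) := by simp only [Matrix.mul_assoc]
      _ = B * (VB⁻¹ * (VB * B⁻¹)) := by rw [hBB, Matrix.one_mul]
      _ = B * ((VB⁻¹ * VB) * B⁻¹) := by rw [Matrix.mul_assoc]
      _ = B * B⁻¹ := by rw [hVV, Matrix.one_mul]
      _ = 1 := hBB
  -- trace identity for t₂
  have ht2 : Matrix.trace ((B * VB⁻¹ * B)⁻¹ * (D * B)ᵀ * (D * B))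
      = Matrix.trace (VB * Dᵀ * D) := by
    rw [hMinv, Matrix.transpose_mul, hBs]
    calc Matrix.trace (B⁻¹ * VB * B⁻¹ * (B * Dᵀ) * (D * B))
        = Matrix.trace (B⁻¹ * (VB * ((B⁻¹ * B) * (Dᵀ * (D * B))))) := by
          simp only [Matrix.mul_assoc]
      _ = Matrix.trace (B⁻¹ * (VB * (Dᵀ * (D * B)))) := by rw [hBinvB, Matrix.one_mul]
      _ = Matrix.trace ((VB * (Dᵀ * (D * B))) * B⁻¹) := Matrix.trace_mul_comm _ _
      _ = Matrix.trace (VB * (Dᵀ * (D * (B * B⁻¹)))) := by simp only [Matrix.mul_assoc]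
      _ = Matrix.trace (VB * (Dᵀ * D)) := by rw [hBB, Matrix.mul_one]
      _ = Matrix.trace (VB * Dᵀ * D) := by rw [Matrix.mul_assoc]
  -- frobenius norm computation
  have hfrob : frobSq ξ = Matrix.trace (θB * θB) + 2 * Matrix.trace ((D * B)ᵀ * (D * B)) := by
    subst hθU hξ
    show Matrix.trace _ = _
    have e1 : ∀ {m : ℕ} (X : Matrix (Fin r) (Fin m) ℝ), Uᵀ * (U * X) = X := by
      intro m X; rw [← Matrix.mul_assoc, hU, Matrix.one_mul]
    have e2 : ∀ {m : ℕ} (X : Matrix (Fin (p-r)) (Fin m) ℝ), Uperpᵀ * (Uperp * X) = X := by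
      intro m X; rw [← Matrix.mul_assoc, hUperp, Matrix.one_mul]
    have e3 : ∀ {m : ℕ} (X : Matrix (Fin (p-r)) (Fin m) ℝ), Uᵀ * (Uperp * X) = 0 := by
      intro m X; rw [← Matrix.mul_assoc, hUUperp, Matrix.zero_mul]
    have e4 : ∀ {m : ℕ} (X : Matrix (Fin r) (Fin m) ℝ), Uperpᵀ * (U * X) = 0 := by
      intro m X; rw [← Matrix.mul_assoc, hUpU, Matrix.zero_mul]
    simp only [Matrix.transpose_add, Matrix.transpose_mul, Matrix.transpose_transpose,
      hBs, hθBs, Matrix.add_mul, Matrix.mul_add, Matrix.trace_add, Matrix.mul_assoc,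
      e1, e2, e3, e4, Matrix.mul_zero, Matrix.zero_mul, Matrix.trace_zero, add_zero, zero_add]
    have t1 : Matrix.trace (U * (B * (Dᵀ * (D * (B * Uᵀ)))))
        = Matrix.trace (B * (Dᵀ * (D * B))) := by
      rw [Matrix.trace_mul_comm]
      simp only [Matrix.mul_assoc]
      rw [hU, Matrix.mul_one]
    have t2 : Matrix.trace (U * (θB * (θB * Uᵀ))) = Matrix.trace (θB * θB) := by
      rw [Matrix.trace_mul_comm]
      simp only [Matrix.mul_assoc]
      rw [hU, Matrix.mul_one]
    have t3 : Matrix.trace (Uperp * (D * (B * (B * (Dᵀ * Uperpᵀ)))))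
        = Matrix.trace (B * (Dᵀ * (D * B))) := by
      rw [Matrix.trace_mul_comm]
      simp only [Matrix.mul_assoc]
      rw [hUperp, Matrix.mul_one]
      conv_rhs => rw [Matrix.trace_mul_comm, Matrix.mul_assoc, Matrix.trace_mul_comm]
      simp only [Matrix.mul_assoc]
    have t4 : Matrix.trace (U * (θB * (B * (Dᵀ * Uperpᵀ)))) = 0 := by
      rw [Matrix.trace_mul_comm]
      simp only [Matrix.mul_assoc]
      rw [hUpU]
      simp
    have t5 : Matrix.trace (Uperp * (D * (B * (θB * Uᵀ)))) = 0 := by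
      rw [Matrix.trace_mul_comm]
      simp only [Matrix.mul_assoc]
      rw [hUUperp]
      simp
    rw [t1, t2, t3, t4, t5]
    ring
  obtain ⟨h1nn, h1low, h1up⟩ := L1 WB⁻¹ hWB.inv θB hθBs
  rw [hWBinvinv] at h1nn h1low h1up
  obtain ⟨h2nn, h2low, h2up⟩ := L2 (B * VB⁻¹ * B) hM (D * B)
  rw [ht2] at h2nn h2low h2up
  subst hg
  rw [hfrob]
  constructor
  · have hmina : min ((eigMin WB⁻¹) ^ 2) (2 * eigMin (B * VB⁻¹ * B)) ≤ (eigMin WB⁻¹) ^ 2 :=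
      min_le_left _ _
    have hminb : min ((eigMin WB⁻¹) ^ 2) (2 * eigMin (B * VB⁻¹ * B))
        ≤ 2 * eigMin (B * VB⁻¹ * B) := min_le_right _ _
    nlinarith [mul_le_mul_of_nonneg_right hmina h1nn, mul_le_mul_of_nonneg_right hminb h2nn]
  · have hmaxa : (eigMax WB⁻¹) ^ 2 ≤ max ((eigMax WB⁻¹) ^ 2) (2 * eigMax (B * VB⁻¹ * B)) :=
      le_max_left _ _
    have hmaxb : 2 * eigMax (B * VB⁻¹ * B)
        ≤ max ((eigMax WB⁻¹) ^ 2) (2 * eigMax (B * VB⁻¹ * B)) := le_max_right _ _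
    nlinarith [mul_le_mul_of_nonneg_right hmaxa h1nn, mul_le_mul_of_nonneg_right hmaxb h2nn]
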